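/- arXiv:2601.05056 — 2 statements merged into one kernel-verified Lean document; each statement's English description precedes it below -/
import Mathlib

section
/- Let f_1, …, f_n : ℝ^d → ℝ each be convex, differentiable with L-Lipschitz gradients, and suppose f = (1/n) Σᵢ fᵢ is μ-strongly convex. Then for all x, y ∈ ℝ^d, ⟨∇f(x) − ∇f(y), x − y⟩ ≥ (μ/2)‖x − y‖₂² + (1/(2nL)) Σᵢ ‖∇fᵢ(x) − ∇fᵢ(y)‖₂². -/
open InnerProductSpace Finset

section Aux
variable {E : Type*} [NormedAddCommGroup E] [InnerProductSpace ℝ E] [CompleteSpace E]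

variable {E : Type*} [NormedAddCommGroup E] [InnerProductSpace ℝ E] [CompleteSpace E]

lemma line_hasDerivAt (f : E → ℝ) (f' : E → E) (hdiff : ∀ z, HasGradientAt f (f' z) z)
    (x v : E) (t : ℝ) :
    HasDerivAt (fun s : ℝ => f (x + s • v)) (inner ℝ (f' (x + t • v)) v : ℝ) t := by
  have hline : HasDerivAt (fun s : ℝ => x + s • v) v t := by
    simpa using ((hasDerivAt_id t).smul_const v).const_add x
  have hf : HasFDerivAt f (toDual ℝ E (f' (x + t • v))) (x + t • v) := hdiff (x + t • v)
  have := hf.comp_hasDerivAt t hline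
  simp only [toDual_apply_apply] at this
  exact this

lemma grad_ineq (f : E → ℝ) (f' : E → E) (hconv : ConvexOn ℝ Set.univ f)
    (hdiff : ∀ z, HasGradientAt f (f' z) z) (x y : E) :
    f x + (inner ℝ (f' x) (y - x) : ℝ) ≤ f y := by
  set v := y - x with hv
  have hcomp : ConvexOn ℝ Set.univ (fun s : ℝ => f (x + s • v)) := by
    refine ⟨convex_univ, fun s _ t _ a b ha hb hab => ?_⟩
    have h := hconv.2 (Set.mem_univ (x + s • v)) (Set.mem_univ (x + t • v)) ha hb hab
    have : x + (a * s + b * t) • v = a • (x + s • v) + b • (x + t • v) := by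
      rw [show b = 1 - a by linarith]
      module
    simpa [this] using h
  have hd0 : HasDerivAt (fun s : ℝ => f (x + s • v)) (inner ℝ (f' x) v : ℝ) 0 := by
    have := line_hasDerivAt f f' hdiff x v 0
    simpa using this
  have hslope := hcomp.le_slope_of_hasDerivAt (Set.mem_univ (0:ℝ)) (Set.mem_univ (1:ℝ))
    one_pos hd0
  rw [slope_def_field] at hslope
  simp only [zero_smul, add_zero, one_smul, sub_zero, div_one] at hslope
  have hxy : x + v = y := by rw [hv]; abel
  rw [hxy] at hslope
  linarith

lemma descent_lemma (f : E → ℝ) (f' : E → E) {L : ℝ} (hL : 0 < L)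
    (hdiff : ∀ z, HasGradientAt f (f' z) z)
    (hlip : ∀ a b, ‖f' a - f' b‖ ≤ L * ‖a - b‖) (x y : E) :
    f y ≤ f x + (inner ℝ (f' x) (y - x) : ℝ) + L / 2 * ‖y - x‖ ^ 2 := by
  set v := y - x with hv
  set φ : ℝ → ℝ := fun t => f (x + t • v) - t * (inner ℝ (f' x) v : ℝ) - t ^ 2 * (L / 2) * ‖v‖ ^ 2
    with hφ
  have hderiv : ∀ t : ℝ, HasDerivAt φ
      ((inner ℝ (f' (x + t • v)) v : ℝ) - (inner ℝ (f' x) v : ℝ) - t * L * ‖v‖ ^ 2) t := by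
    intro t
    have h1 := line_hasDerivAt f f' hdiff x v t
    have h2 : HasDerivAt (fun t : ℝ => t * (inner ℝ (f' x) v : ℝ)) (inner ℝ (f' x) v : ℝ) t := by
      simpa using (hasDerivAt_id t).mul_const (inner ℝ (f' x) v : ℝ)
    have h3 : HasDerivAt (fun t : ℝ => t ^ 2 * (L / 2) * ‖v‖ ^ 2)
        (t * L * ‖v‖ ^ 2) t := by
      have := ((hasDerivAt_pow 2 t).mul_const (L / 2)).mul_const (‖v‖ ^ 2)
      refine this.congr_deriv ?_
      ring
    exact (h1.sub h2).sub h3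
  have hnonpos : ∀ t ∈ Set.Icc (0:ℝ) 1, ∀ t ∈ interior (Set.Icc (0:ℝ) 1), True := fun _ _ _ _ => trivial
  have hanti : AntitoneOn φ (Set.Icc (0:ℝ) 1) := by
    apply antitoneOn_of_deriv_nonpos (convex_Icc 0 1)
    · exact Continuous.continuousOn
        (Differentiable.continuous (fun t => (hderiv t).differentiableAt))
    · intro t ht
      exact ((hderiv t).differentiableAt).differentiableWithinAt
    · intro t ht
      rw [interior_Icc] at ht
      rw [(hderiv t).deriv]
      have hcs : (inner ℝ (f' (x + t • v)) v : ℝ) - (inner ℝ (f' x) v : ℝ) ≤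
          ‖f' (x + t • v) - f' x‖ * ‖v‖ := by
        rw [← inner_sub_left]
        exact (real_inner_le_norm _ _)
      have hl : ‖f' (x + t • v) - f' x‖ ≤ L * (t * ‖v‖) := by
        have := hlip (x + t • v) x
        simpa [norm_smul, abs_of_pos ht.1, mul_comm] using this
      nlinarith [norm_nonneg v, ht.1.le, mul_le_mul_of_nonneg_right hl (norm_nonneg v)]
  have h01 := hanti (Set.left_mem_Icc.mpr zero_le_one) (Set.right_mem_Icc.mpr zero_le_one)
    zero_le_one
  simp only [hφ] at h01
  simp only [zero_smul, add_zero, one_smul, zero_mul, sub_zero, zero_pow, one_mul, one_pow] at h01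
  have hy : x + v = y := by rw [hv]; abel
  rw [hy] at h01
  linarith

lemma cocoercive (f : E → ℝ) (f' : E → E) {L : ℝ} (hL : 0 < L)
    (hconv : ConvexOn ℝ Set.univ f)
    (hdiff : ∀ z, HasGradientAt f (f' z) z)
    (hlip : ∀ a b, ‖f' a - f' b‖ ≤ L * ‖a - b‖) (x y : E) :
    (1 / L) * ‖f' x - f' y‖ ^ 2 ≤ (inner ℝ (f' x - f' y) (x - y) : ℝ) := by
  have key : ∀ a b : E, f a + (inner ℝ (f' a) (b - a) : ℝ) + (1 / (2 * L)) * ‖f' b - f' a‖ ^ 2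
      ≤ f b := by
    intro a b
    set u := f' b - f' a with hu
    set z := b - (L⁻¹) • u with hz
    have h1 := grad_ineq f f' hconv hdiff a z
    have h2 := descent_lemma f f' hL hdiff hlip b z
    have hzb : z - b = -(L⁻¹ • u) := by rw [hz]; abel
    have hza : z - a = (b - a) - L⁻¹ • u := by rw [hz]; abel
    have e1 : (inner ℝ (f' b) (z - b) : ℝ) = -(L⁻¹ * (inner ℝ (f' b) u : ℝ)) := by
      rw [hzb, inner_neg_right, real_inner_smul_right]
    have e2 : ‖z - b‖ ^ 2 = L⁻¹ ^ 2 * ‖u‖ ^ 2 := by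
      rw [hzb, norm_neg, norm_smul]
      rw [Real.norm_eq_abs, abs_of_pos (inv_pos.mpr hL)]
      ring
    have e3 : (inner ℝ (f' a) (z - a) : ℝ) = (inner ℝ (f' a) (b - a) : ℝ) -
        L⁻¹ * (inner ℝ (f' a) u : ℝ) := by
      rw [hza, inner_sub_right, real_inner_smul_right]
    have e4 : (inner ℝ (f' b) u : ℝ) - (inner ℝ (f' a) u : ℝ) = ‖u‖ ^ 2 := by
      rw [← inner_sub_left, ← hu, real_inner_self_eq_norm_sq]
    rw [e1, e2] at h2
    rw [e3] at h1
    have hLinv : L⁻¹ > 0 := inv_pos.mpr hL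
    have h12 : (1 / (2 * L)) * ‖u‖ ^ 2 = L⁻¹ * ‖u‖ ^ 2 - L / 2 * (L⁻¹ ^ 2 * ‖u‖ ^ 2) := by
      field_simp
      ring
    nlinarith [h1, h2]
  have k1 := key x y
  have k2 := key y x
  have hn : ‖f' x - f' y‖ = ‖f' y - f' x‖ := norm_sub_rev _ _
  have e5 : (inner ℝ (f' x) (y - x) : ℝ) = -(inner ℝ (f' x) (x - y) : ℝ) := by
    rw [← inner_neg_right]; congr 1; abel
  have e6 : (inner ℝ (f' x - f' y) (x - y) : ℝ) = (inner ℝ (f' x) (x - y) : ℝ) -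
      (inner ℝ (f' y) (x - y) : ℝ) := inner_sub_left _ _ _
  have hLinv : (0:ℝ) < 1 / L := by positivity
  rw [e5] at k1
  rw [e6]
  have : (1 / (2 * L)) * ‖f' y - f' x‖ ^ 2 = (1 / (2 * L)) * ‖f' x - f' y‖ ^ 2 := by rw [hn]
  have h2L : 1 / L * ‖f' x - f' y‖ ^ 2 = 2 * (1 / (2 * L) * ‖f' x - f' y‖ ^ 2) := by
    field_simp
  linarith [k1, k2]

end Aux

/-- Strongly convex case: for convex `L`-smooth components whose average `f` is
`μ`-strongly convex, `⟨∇f(x)−∇f(y), x−y⟩ ≥ (μ/2)‖x−y‖² + (1/(2nL)) Σᵢ ‖∇fᵢ(x)−∇fᵢ(y)‖²`. -/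
theorem stmt3 {d n : ℕ} (hn : 0 < n)
    (f : Fin n → EuclideanSpace ℝ (Fin d) → ℝ)
    (f' : Fin n → EuclideanSpace ℝ (Fin d) → EuclideanSpace ℝ (Fin d))
    (L μ : ℝ) (hL : 0 < L)
    (hconv : ∀ i, ConvexOn ℝ Set.univ (f i))
    (hdiff : ∀ i x, HasGradientAt (f i) (f' i x) x)
    (hlip : ∀ i x y, ‖f' i x - f' i y‖ ≤ L * ‖x - y‖)
    (hsc : ∀ x y : EuclideanSpace ℝ (Fin d),
      (n : ℝ)⁻¹ * (∑ i, f i y) ≥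
        (n : ℝ)⁻¹ * (∑ i, f i x) + (inner ℝ ((n : ℝ)⁻¹ • ∑ i, f' i x) (y - x) : ℝ) +
          (μ / 2) * ‖y - x‖ ^ 2) :
    ∀ x y : EuclideanSpace ℝ (Fin d),
      (inner ℝ ((n : ℝ)⁻¹ • ∑ i, f' i x - (n : ℝ)⁻¹ • ∑ i, f' i y) (x - y) : ℝ) ≥
        (μ / 2) * ‖x - y‖ ^ 2 + (1 / (2 * n * L)) * ∑ i, ‖f' i x - f' i y‖ ^ 2 := by
  intro x y
  have hn0 : (0:ℝ) < n := Nat.cast_pos.mpr hn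
  have hco : ∀ i, (1/L) * ‖f' i x - f' i y‖ ^ 2 ≤ (inner ℝ (f' i x - f' i y) (x - y) : ℝ) :=
    fun i => cocoercive (f i) (f' i) hL (hconv i) (hdiff i) (hlip i) x y
  have hsum : ∑ i, (1/L) * ‖f' i x - f' i y‖ ^ 2
      ≤ ∑ i, (inner ℝ (f' i x - f' i y) (x - y) : ℝ) :=
    Finset.sum_le_sum fun i _ => hco i
  have hsum' : (1/L) * ∑ i, ‖f' i x - f' i y‖ ^ 2
      ≤ ∑ i, (inner ℝ (f' i x - f' i y) (x - y) : ℝ) := by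
    rw [Finset.mul_sum]; exact hsum
  have eL : (inner ℝ ((n : ℝ)⁻¹ • ∑ i, f' i x - (n : ℝ)⁻¹ • ∑ i, f' i y) (x - y) : ℝ)
      = (n:ℝ)⁻¹ * ∑ i, (inner ℝ (f' i x - f' i y) (x - y) : ℝ) := by
    rw [← smul_sub, real_inner_smul_left, ← Finset.sum_sub_distrib, sum_inner]
  have s1 := hsc x y
  have s2 := hsc y x
  have e1 : (inner ℝ ((n : ℝ)⁻¹ • ∑ i, f' i x) (y - x) : ℝ)
      = -(inner ℝ ((n : ℝ)⁻¹ • ∑ i, f' i x) (x - y) : ℝ) := by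
    rw [← inner_neg_right]; congr 1; abel
  have enorm : ‖y - x‖ = ‖x - y‖ := norm_sub_rev _ _
  rw [e1, enorm] at s1
  have e2 : (inner ℝ ((n : ℝ)⁻¹ • ∑ i, f' i x - (n : ℝ)⁻¹ • ∑ i, f' i y) (x - y) : ℝ)
      = (inner ℝ ((n : ℝ)⁻¹ • ∑ i, f' i x) (x - y) : ℝ)
        - (inner ℝ ((n : ℝ)⁻¹ • ∑ i, f' i y) (x - y) : ℝ) := inner_sub_left _ _ _
  have hstrong : (inner ℝ ((n : ℝ)⁻¹ • ∑ i, f' i x - (n : ℝ)⁻¹ • ∑ i, f' i y) (x - y) : ℝ)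
      ≥ μ * ‖x - y‖ ^ 2 := by rw [e2]; linarith
  have hB : (n:ℝ)⁻¹ * ((1/L) * ∑ i, ‖f' i x - f' i y‖ ^ 2)
      ≤ (inner ℝ ((n : ℝ)⁻¹ • ∑ i, f' i x - (n : ℝ)⁻¹ • ∑ i, f' i y) (x - y) : ℝ) := by
    rw [eL]; exact mul_le_mul_of_nonneg_left hsum' (by positivity)
  have hkey : (1 / (2 * n * L)) * ∑ i, ‖f' i x - f' i y‖ ^ 2
      = (1/2) * ((n:ℝ)⁻¹ * ((1/L) * ∑ i, ‖f' i x - f' i y‖ ^ 2)) := by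
    field_simp
    try ring
    try exact Or.inl trivial
  linarith [hstrong, hB]
end

section
/- Let f₁, …, f_n : ℝ^d → ℝ be differentiable with L-Lipschitz gradients. Let S be a finite set of pairs (i, u) with i ∈ {1,…,n} and, for each fixed i, orthonormal directions. Let G = Σ_{(i,u)∈S} ∇̂_u fᵢ(x; β) eᵢᵀ where ∇̂_u fᵢ(x; β) = ((fᵢ(x + βu) − fᵢ(x))/β) u, and let P(A) = Σ_{(i,u)∈S} u uᵀ A eᵢ eᵢᵀ. Then ‖G − P(∇F(x))‖_F² ≤ |S| L² β² / 4, where ∇F(x) is the d×n matrix with columns ∇fᵢ(x). -/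
open Finset

variable {d n : ℕ}

/-- The projection operator `P(A) = Σ_{(i,u)∈S} u uᵀ A eᵢ eᵢᵀ`. -/
def Pop (S : Finset (Fin n × EuclideanSpace ℝ (Fin d)))
    (A : Matrix (Fin d) (Fin n) ℝ) : Matrix (Fin d) (Fin n) ℝ :=
  ∑ p ∈ S, Matrix.of fun j i => if i = p.1 then p.2 j * ∑ l, p.2 l * A l p.1 else 0

/-- For each fixed index `i`, the directions paired with `i` in `S` are orthonormal. -/
def PerIndexOrthonormal (S : Finset (Fin n × EuclideanSpace ℝ (Fin d))) : Prop :=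
  (∀ p ∈ S, ‖p.2‖ = 1) ∧
    ∀ p ∈ S, ∀ q ∈ S, p.1 = q.1 → p.2 ≠ q.2 → (inner ℝ p.2 q.2 : ℝ) = 0

/-- Squared Frobenius norm. -/
def frobSq (A : Matrix (Fin d) (Fin n) ℝ) : ℝ := ∑ j, ∑ i, A j i ^ 2

lemma key {d : ℕ} (g : EuclideanSpace ℝ (Fin d) → ℝ)
    (g' : EuclideanSpace ℝ (Fin d) → EuclideanSpace ℝ (Fin d)) (L β : ℝ)
    (hβ : 0 < β) (hL : 0 ≤ L)
    (hdiff : ∀ y, HasGradientAt g (g' y) y)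
    (hlip : ∀ a b, ‖g' a - g' b‖ ≤ L * ‖a - b‖)
    (x u : EuclideanSpace ℝ (Fin d)) (hu : ‖u‖ = 1) :
    |(g (x + β • u) - g x) / β - ∑ l, u l * g' x l| ≤ L * β / 2 := by
  set v : EuclideanSpace ℝ (Fin d) := β • u with hv
  have hvnorm : ‖v‖ = β := by
    rw [hv, norm_smul, hu, Real.norm_eq_abs, abs_of_pos hβ, mul_one]
  -- continuity of g'
  have hg'cont : Continuous g' := by
    have : LipschitzWith L.toNNReal g' := by
      apply LipschitzWith.of_dist_le_mul
      intro a b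
      simpa [dist_eq_norm, Real.coe_toNNReal L hL] using hlip a b
    exact this.continuous
  -- derivative of t ↦ g (x + t • v)
  have hderiv : ∀ t : ℝ, HasDerivAt (fun t : ℝ => g (x + t • v))
      ((inner ℝ (g' (x + t • v)) v : ℝ)) t := by
    intro t
    have hline : HasDerivAt (fun t : ℝ => x + t • v) v t := by
      simpa using ((hasDerivAt_id t).smul_const v).const_add x
    have := ((hdiff (x + t • v)).hasFDerivAt).comp_hasDerivAt t hline
    simpa [InnerProductSpace.toDual_apply_apply, Function.comp_def] using this
  have hcont : Continuous (fun t : ℝ => (inner ℝ (g' (x + t • v)) v : ℝ)) := by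
    exact (Continuous.inner (hg'cont.comp (by continuity)) continuous_const)
  have hFTC : ∫ t in (0:ℝ)..1, (inner ℝ (g' (x + t • v)) v : ℝ)
      = g (x + v) - g x := by
    have := intervalIntegral.integral_eq_sub_of_hasDerivAt
      (f := fun t : ℝ => g (x + t • v))
      (f' := fun t : ℝ => (inner ℝ (g' (x + t • v)) v : ℝ))
      (a := 0) (b := 1) (fun t _ => hderiv t)
      (hcont.intervalIntegrable 0 1)
    simpa using this
  -- main estimate
  have hkey : |g (x + v) - g x - (inner ℝ (g' x) v : ℝ)| ≤ L * β ^ 2 / 2 := by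
    have hrw : g (x + v) - g x - (inner ℝ (g' x) v : ℝ)
        = ∫ t in (0:ℝ)..1, ((inner ℝ (g' (x + t • v)) v : ℝ) - (inner ℝ (g' x) v : ℝ)) := by
      rw [intervalIntegral.integral_sub (hcont.intervalIntegrable 0 1)
        (intervalIntegrable_const), hFTC]
      simp
    rw [hrw]
    have hboundpt : ∀ t ∈ Set.Icc (0:ℝ) 1,
        |(inner ℝ (g' (x + t • v)) v : ℝ) - (inner ℝ (g' x) v : ℝ)| ≤ L * β ^ 2 * t := by
      intro t ht
      have h1 : (inner ℝ (g' (x + t • v)) v : ℝ) - (inner ℝ (g' x) v : ℝ)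
          = inner ℝ (g' (x + t • v) - g' x) v := by
        rw [inner_sub_left]
      rw [h1]
      have hnrm : ‖(x + t • v) - x‖ = t * β := by
        rw [add_sub_cancel_left, norm_smul, hvnorm, Real.norm_eq_abs,
          abs_of_nonneg ht.1]
      calc |(inner ℝ (g' (x + t • v) - g' x) v : ℝ)|
          ≤ ‖g' (x + t • v) - g' x‖ * ‖v‖ := abs_real_inner_le_norm _ _
        _ ≤ (L * ‖(x + t • v) - x‖) * ‖v‖ :=
            mul_le_mul_of_nonneg_right (hlip _ _) (norm_nonneg _)
        _ = L * β ^ 2 * t := by rw [hnrm, hvnorm]; ring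
    calc |∫ t in (0:ℝ)..1, ((inner ℝ (g' (x + t • v)) v : ℝ) - (inner ℝ (g' x) v : ℝ))|
        ≤ |∫ t in (0:ℝ)..1, L * β ^ 2 * t| := by
          rw [← Real.norm_eq_abs]
          apply intervalIntegral.norm_integral_le_abs_of_norm_le
          · filter_upwards [MeasureTheory.ae_restrict_mem measurableSet_uIoc] with t ht
            have ht' : t ∈ Set.Icc (0:ℝ) 1 := by
              rcases Set.mem_uIoc.mp ht with h | h
              · exact ⟨le_of_lt h.1, h.2⟩
              · constructor <;> linarith [h.1, h.2]
            simpa using hboundpt t ht'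
          · have : Continuous fun t : ℝ => L * β ^ 2 * t := continuous_const.mul continuous_id
            exact this.intervalIntegrable 0 1
      _ = L * β ^ 2 / 2 := by
          rw [intervalIntegral.integral_const_mul, integral_id, abs_of_nonneg]
          · ring
          · positivity
  -- conclude
  have hinner : (inner ℝ (g' x) v : ℝ) = β * ∑ l, u l * g' x l := by
    rw [hv, real_inner_smul_right, real_inner_comm]
    simp [PiLp.inner_apply, RCLike.inner_apply]
    exact Or.inl (Finset.sum_congr rfl fun _ _ => mul_comm _ _)
  have heq : (g (x + v) - g x) / β - ∑ l, u l * g' x l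
      = (g (x + v) - g x - (inner ℝ (g' x) v : ℝ)) / β := by
    rw [hinner]; field_simp
  rw [hv] at heq ⊢
  rw [heq, abs_div, abs_of_pos hβ, div_le_iff₀ hβ]
  calc |g (x + β • u) - g x - (inner ℝ (g' x) (β • u) : ℝ)| ≤ L * β ^ 2 / 2 := hv ▸ hkey
    _ = L * β / 2 * β := by ring

/-- `‖G − P(∇F(x))‖_F² ≤ |S| L² β² / 4` where `G` collects the two-point
estimators `∇̂_u fᵢ(x;β) eᵢᵀ` over `(i,u) ∈ S`. -/
theorem stmt6 (f : Fin n → EuclideanSpace ℝ (Fin d) → ℝ)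
    (f' : Fin n → EuclideanSpace ℝ (Fin d) → EuclideanSpace ℝ (Fin d))
    (L : ℝ)
    (hdiff : ∀ i x, HasGradientAt (f i) (f' i x) x)
    (hlip : ∀ i x y, ‖f' i x - f' i y‖ ≤ L * ‖x - y‖)
    (S : Finset (Fin n × EuclideanSpace ℝ (Fin d)))
    (hS : PerIndexOrthonormal S)
    (β : ℝ) (hβ : 0 < β) (x : EuclideanSpace ℝ (Fin d)) :
    frobSq
        ((∑ p ∈ S, Matrix.of fun j i =>
            if i = p.1 then ((f p.1 (x + β • p.2) - f p.1 x) / β) * p.2 j else 0)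
          - Pop S (Matrix.of fun j i => f' i x j)) ≤
      S.card * L ^ 2 * β ^ 2 / 4 := by
  obtain ⟨hnorm, horth⟩ := hS
  set c : Fin n × EuclideanSpace ℝ (Fin d) → ℝ := fun p =>
    (f p.1 (x + β • p.2) - f p.1 x) / β - ∑ l, p.2 l * f' p.1 x l with hc
  -- bound on each c p
  have hcbound : ∀ p ∈ S, |c p| ≤ L * β / 2 := by
    intro p hp
    have hL : 0 ≤ L := by
      have h1 := hlip p.1 (x + β • p.2) x
      have h2 : ‖(x + β • p.2) - x‖ = β := by
        rw [add_sub_cancel_left, norm_smul, hnorm p hp, Real.norm_eq_abs,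
          abs_of_pos hβ, mul_one]
      rw [h2] at h1
      nlinarith [norm_nonneg (f' p.1 (x + β • p.2) - f' p.1 x)]
    exact key (f p.1) (f' p.1) L β hβ hL (hdiff p.1) (fun a b => hlip p.1 a b) x p.2
      (hnorm p hp)
  -- entrywise formula for the matrix difference
  have hentry : ∀ j i,
      ((∑ p ∈ S, Matrix.of fun j i =>
          if i = p.1 then ((f p.1 (x + β • p.2) - f p.1 x) / β) * p.2 j else 0)
        - Pop S (Matrix.of fun j i => f' i x j)) j i
      = ∑ p ∈ S, (if i = p.1 then c p * p.2 j else 0) := by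
    intro j i
    simp only [Matrix.sub_apply, Pop, Matrix.sum_apply, Matrix.of_apply,
      ← Finset.sum_sub_distrib]
    apply Finset.sum_congr rfl
    intro p _
    by_cases h : i = p.1 <;> simp [h, hc] <;> ring
  -- inner product facts
  have hinner : ∀ p q : Fin n × EuclideanSpace ℝ (Fin d),
      (inner ℝ p.2 q.2 : ℝ) = ∑ j, p.2 j * q.2 j := by
    intro p q
    simp [PiLp.inner_apply, RCLike.inner_apply]
    exact Finset.sum_congr rfl fun _ _ => mul_comm _ _
  -- expand the square
  have e1 : ∀ j : Fin d,
      (∑ i, (∑ p ∈ S, (if i = p.1 then c p * p.2 j else 0)) ^ 2)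
      = ∑ p ∈ S, ∑ q ∈ S,
          (if p.1 = q.1 then (c p * p.2 j) * (c q * q.2 j) else 0) := by
    intro j
    simp_rw [sq, Finset.sum_mul_sum]
    rw [Finset.sum_comm]
    refine Finset.sum_congr rfl fun p _ => ?_
    rw [Finset.sum_comm]
    refine Finset.sum_congr rfl fun q _ => ?_
    simp_rw [ite_mul, zero_mul, mul_ite, mul_zero]
    rw [Finset.sum_ite_eq' Finset.univ p.1
      (fun i => if i = q.1 then (c p * p.2 j) * (c q * q.2 j) else 0)]
    simp [eq_comm]
  have e2 : frobSq
        ((∑ p ∈ S, Matrix.of fun j i =>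
            if i = p.1 then ((f p.1 (x + β • p.2) - f p.1 x) / β) * p.2 j else 0)
          - Pop S (Matrix.of fun j i => f' i x j))
      = ∑ p ∈ S, c p ^ 2 := by
    unfold frobSq
    simp_rw [hentry, e1]
    rw [Finset.sum_comm]
    refine Finset.sum_congr rfl fun p hp => ?_
    rw [Finset.sum_comm]
    rw [Finset.sum_eq_single p]
    · by_cases h : p.1 = p.1
      · have hpp : ∑ j, p.2 j * p.2 j = 1 := by
          rw [← hinner p p, real_inner_self_eq_norm_sq, hnorm p hp]; norm_num
        simp only [h, if_true]
        have hsum : ∑ j', c p * p.2 j' * (c p * p.2 j')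
            = c p ^ 2 * ∑ j', p.2 j' * p.2 j' := by
          rw [Finset.mul_sum]; exact Finset.sum_congr rfl fun _ _ => by ring
        rw [hsum, hpp, mul_one]
      · exact absurd rfl h
    · intro q hq hqp
      by_cases h : p.1 = q.1
      · have hne : p.2 ≠ q.2 := by
          intro he
          exact hqp (Prod.ext h.symm he.symm)
        have h0 : ∑ j, p.2 j * q.2 j = 0 := by
          rw [← hinner p q]; exact horth p hp q hq h hne
        simp only [h, if_true]
        calc ∑ j, (c p * p.2 j) * (c q * q.2 j)
            = c p * c q * ∑ j, p.2 j * q.2 j := by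
              rw [Finset.mul_sum]; exact Finset.sum_congr rfl fun j _ => by ring
          _ = 0 := by rw [h0, mul_zero]
      · simp [h]
    · intro hps; exact absurd hp hps
  rw [e2]
  have : ∑ p ∈ S, c p ^ 2 ≤ ∑ p ∈ S, (L * β / 2) ^ 2 := by
    refine Finset.sum_le_sum fun p hp => ?_
    have := hcbound p hp
    calc c p ^ 2 = |c p| ^ 2 := (sq_abs _).symm
      _ ≤ (L * β / 2) ^ 2 := by
          exact pow_le_pow_left₀ (abs_nonneg _) this 2
  refine this.trans ?_
  rw [Finset.sum_const, nsmul_eq_mul]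
  ring_nf
  nlinarith [sq_nonneg (L*β)]
end
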